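/- Let s, t, a, b be positive integers with a < s and b ≤ s. Then there exists a constant C = C(a,b,s,t) such that every n-vertex graph G containing no copy of the complete bipartite graph K_{s,t} contains at most C · n^{a + b - ab/s} copies of K_{a,b}. -/

import Mathlib

open Finset

/-- A graph `G` contains a copy of `K_{s,t}`: disjoint sets of sizes `s`, `t`
with all edges between them present. -/
def ContainsKst {n : ℕ} (G : SimpleGraph (Fin n)) (s t : ℕ) : Prop :=
  ∃ A B : Finset (Fin n), Disjoint A B ∧ A.card = s ∧ B.card = t ∧
    ∀ a ∈ A, ∀ b ∈ B, G.Adj a b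

/-- common neighborhood -/
def commonNbhd {n : ℕ} (G : SimpleGraph (Fin n)) [DecidableRel G.Adj]
    (B : Finset (Fin n)) : Finset (Fin n) :=
  Finset.univ.filter (fun v => ∀ y ∈ B, G.Adj v y)

lemma mem_commonNbhd {n : ℕ} (G : SimpleGraph (Fin n)) [DecidableRel G.Adj]
    {B : Finset (Fin n)} {v : Fin n} :
    v ∈ commonNbhd G B ↔ ∀ y ∈ B, G.Adj v y := by
  simp [commonNbhd]

lemma subset_commonNbhd_comm {n : ℕ} (G : SimpleGraph (Fin n)) [DecidableRel G.Adj]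
    {A B : Finset (Fin n)} :
    A ⊆ commonNbhd G B ↔ B ⊆ commonNbhd G A := by
  simp only [Finset.subset_iff, mem_commonNbhd]
  exact ⟨fun h y hy x hx => (h hx _ hy).symm, fun h x hx y hy => (h hy _ hx).symm⟩

lemma card_filter_pairs {n : ℕ} (H : Finset (Fin n) → Finset (Fin n)) (c k : ℕ) :
    ((Finset.univ ×ˢ Finset.univ).filter
       (fun p : Finset (Fin n) × Finset (Fin n) => p.1.card = c ∧ p.2.card = k ∧ p.1 ⊆ H p.2)).card
    = ∑ B ∈ Finset.univ.filter (fun B : Finset (Fin n) => B.card = k),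
        ((H B).card.choose c) := by
  rw [Finset.card_eq_sum_card_fiberwise (f := Prod.snd)
    (t := Finset.univ.filter (fun B : Finset (Fin n) => B.card = k))
    (by intro p hp; simp only [mem_coe, mem_filter, mem_product] at hp ⊢; exact ⟨mem_univ _, hp.2.2.1⟩)]
  refine Finset.sum_congr rfl fun B hB => ?_
  rw [← Finset.card_powersetCard c (H B)]
  simp only [mem_filter, mem_univ, true_and] at hB
  refine Finset.card_bij' (fun p _ => p.1) (fun A _ => (A, B)) ?_ ?_ ?_ ?_
  · intro p hp
    simp only [mem_filter, mem_product, mem_powersetCard] at hp ⊢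
    obtain ⟨⟨_, h1, h2, h3⟩, h4⟩ := hp
    subst h4
    exact ⟨h3, h1⟩
  · intro A hA
    simp only [mem_powersetCard] at hA
    simp only [mem_filter, mem_product]
    exact ⟨⟨⟨mem_univ _, mem_univ _⟩, hA.2, hB, hA.1⟩, trivial⟩
  · intro p hp
    simp only [mem_filter] at hp
    exact Prod.ext rfl hp.2.symm
  · intro A hA
    rfl

lemma double_count {n : ℕ} (G : SimpleGraph (Fin n)) [DecidableRel G.Adj] (b s : ℕ) :
    ∑ B ∈ Finset.univ.filter (fun B : Finset (Fin n) => B.card = b),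
        ((commonNbhd G B).card.choose s)
    = ∑ S ∈ Finset.univ.filter (fun S : Finset (Fin n) => S.card = s),
        ((commonNbhd G S).card.choose b) := by
  rw [← card_filter_pairs (commonNbhd G) s b, ← card_filter_pairs (commonNbhd G) b s]
  refine Finset.card_bij' (fun p _ => p.swap) (fun p _ => p.swap) ?_ ?_ ?_ ?_
  · intro p hp
    simp only [mem_filter, mem_product, Prod.fst_swap, Prod.snd_swap] at hp ⊢
    exact ⟨⟨mem_univ _, mem_univ _⟩, hp.2.2.1, hp.2.1, (subset_commonNbhd_comm G).1 hp.2.2.2⟩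
  · intro p hp
    simp only [mem_filter, mem_product, Prod.fst_swap, Prod.snd_swap] at hp ⊢
    exact ⟨⟨mem_univ _, mem_univ _⟩, hp.2.2.1, hp.2.1, (subset_commonNbhd_comm G).1 hp.2.2.2⟩
  · intro p _; exact Prod.swap_swap p
  · intro p _; exact Prod.swap_swap p

lemma card_filter_card_eq {n k : ℕ} :
    (Finset.univ.filter (fun B : Finset (Fin n) => B.card = k)).card = n.choose k := by
  rw [← Finset.powerset_univ, ← Finset.powersetCard_eq_filter, Finset.card_powersetCard,
    card_univ, Fintype.card_fin]

lemma cn_card_le {n s t : ℕ} (ht : 0 < t) (G : SimpleGraph (Fin n)) [DecidableRel G.Adj]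
    (hG : ¬ ContainsKst G s t) {S : Finset (Fin n)} (hS : S.card = s) :
    (commonNbhd G S).card ≤ t - 1 := by
  by_contra h
  push_neg at h
  obtain ⟨B, hBsub, hBcard⟩ := Finset.exists_subset_card_eq (show t ≤ (commonNbhd G S).card by omega)
  refine hG ⟨S, B, ?_, hS, hBcard, fun x hx y hy => ((mem_commonNbhd G).1 (hBsub hy) x hx).symm⟩
  rw [Finset.disjoint_left]
  intro v hvS hvB
  exact G.irrefl ((mem_commonNbhd G).1 (hBsub hvB) v hvS)

/-- `m ^ s ≤ (2s)^s * s! * (choose m s + 1)` over the reals. -/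
lemma pow_le_const_mul_choose (s : ℕ) (hs : 0 < s) (m : ℕ) :
    (m : ℝ) ^ s ≤ (2 * s : ℝ) ^ s * (Nat.factorial s : ℝ) * ((m.choose s : ℝ) + 1) := by
  have hfac : (1 : ℝ) ≤ (Nat.factorial s : ℝ) := by exact_mod_cast s.factorial_pos
  have hch : (0 : ℝ) ≤ (m.choose s : ℝ) := by positivity
  rcases lt_or_ge m (2 * s) with hm | hm
  · have h1 : (m : ℝ) ^ s ≤ (2 * s : ℝ) ^ s := by
      apply pow_le_pow_left₀ (by positivity)
      exact_mod_cast hm.le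
    calc (m : ℝ) ^ s ≤ (2 * s : ℝ) ^ s := h1
      _ = (2 * s : ℝ) ^ s * 1 * 1 := by ring
      _ ≤ (2 * s : ℝ) ^ s * (Nat.factorial s : ℝ) * ((m.choose s : ℝ) + 1) := by
          gcongr <;> first | positivity | linarith
  · have key : ((m + 1 - s : ℕ) ^ s : ℝ) / (Nat.factorial s : ℝ) ≤ (m.choose s : ℝ) :=
      Nat.pow_le_choose s m
    have hmle : (m : ℝ) ≤ 2 * ((m + 1 - s : ℕ) : ℝ) := by
      have : m ≤ 2 * (m + 1 - s) := by omega
      exact_mod_cast this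
    have h1 : (m : ℝ) ^ s ≤ (2 : ℝ) ^ s * ((m + 1 - s : ℕ) : ℝ) ^ s := by
      calc (m : ℝ) ^ s ≤ (2 * ((m + 1 - s : ℕ) : ℝ)) ^ s :=
            pow_le_pow_left₀ (by positivity) hmle s
        _ = (2 : ℝ) ^ s * ((m + 1 - s : ℕ) : ℝ) ^ s := mul_pow _ _ _
    have h2 : ((m + 1 - s : ℕ) : ℝ) ^ s ≤ (Nat.factorial s : ℝ) * (m.choose s : ℝ) := by
      rw [div_le_iff₀ (by exact_mod_cast s.factorial_pos)] at key
      calc ((m + 1 - s : ℕ) : ℝ) ^ s ≤ (m.choose s : ℝ) * (Nat.factorial s : ℝ) := key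
        _ = (Nat.factorial s : ℝ) * (m.choose s : ℝ) := mul_comm _ _
    have h3 : (2:ℝ) ^ s ≤ (2 * s : ℝ) ^ s := by
      apply pow_le_pow_left₀ (by norm_num)
      have : (1:ℝ) ≤ (s:ℝ) := by exact_mod_cast hs
      nlinarith
    calc (m : ℝ) ^ s ≤ (2 : ℝ) ^ s * ((m + 1 - s : ℕ) : ℝ) ^ s := h1
      _ ≤ (2 : ℝ) ^ s * ((Nat.factorial s : ℝ) * (m.choose s : ℝ)) := by
          apply mul_le_mul_of_nonneg_left h2 (by positivity)
      _ = (2:ℝ) ^ s * (Nat.factorial s : ℝ) * (m.choose s : ℝ) := by ring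
      _ ≤ (2 * s : ℝ) ^ s * (Nat.factorial s : ℝ) * ((m.choose s : ℝ) + 1) := by
          gcongr <;> linarith

/-- In a `K_{s,t}`-free graph with `a < s` and `b ≤ s`, the number of copies of
`K_{a,b}` (unordered pairs of parts) is at most `C · n^{a+b-ab/s}`. -/
theorem count_Kab_in_Kst_free
    (s t a b : ℕ) (hs : 0 < s) (ht : 0 < t) (ha : 0 < a) (hb : 0 < b)
    (has : a < s) (hbs : b ≤ s) :
    ∃ C : ℝ, 0 < C ∧ ∀ n : ℕ, ∀ G : SimpleGraph (Fin n), ¬ ContainsKst G s t →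
      (Nat.card {P : Finset (Finset (Fin n)) //
          ∃ A B : Finset (Fin n), P = {A, B} ∧ Disjoint A B ∧
            A.card = a ∧ B.card = b ∧ ∀ x ∈ A, ∀ y ∈ B, G.Adj x y} : ℝ)
        ≤ C * (n : ℝ) ^ ((a : ℝ) + b - a * b / s) := by
  have hs0 : ((s : ℝ)) ≠ 0 := by positivity
  have ha0 : ((a : ℝ)) ≠ 0 := by positivity
  -- the constant
  set D : ℝ := (2 * s : ℝ) ^ s * (Nat.factorial s : ℝ) * ((t : ℝ) ^ b + 1) with hD
  have hD1 : 1 ≤ D := by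
    have h1 : (1:ℝ) ≤ (2 * s : ℝ) ^ s := by
      calc (1:ℝ) = 1 ^ s := (one_pow s).symm
        _ ≤ (2 * s : ℝ) ^ s := by
            apply pow_le_pow_left₀ (by norm_num)
            have : (1:ℝ) ≤ (s:ℝ) := by exact_mod_cast hs
            linarith
    have h2 : (1:ℝ) ≤ (Nat.factorial s : ℝ) := by exact_mod_cast s.factorial_pos
    have h3 : (1:ℝ) ≤ (t : ℝ) ^ b + 1 := by nlinarith [pow_nonneg (show (0:ℝ) ≤ (t:ℝ) by positivity) b]
    have h12 : (1:ℝ) ≤ (2 * s : ℝ) ^ s * (Nat.factorial s : ℝ) := by nlinarith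
    rw [hD]
    nlinarith
  refine ⟨D ^ ((a : ℝ) / s), by positivity, fun n G hG => ?_⟩
  haveI : DecidableRel G.Adj := fun _ _ => Classical.dec _
  -- exponent positivity
  have hexp : 0 < (a : ℝ) + b - a * b / s := by
    have h1 : (a : ℝ) * b / s ≤ a := by
      rw [div_le_iff₀ (by positivity)]
      have hb' : (b : ℝ) ≤ s := by exact_mod_cast hbs
      nlinarith [show (0:ℝ) ≤ (a:ℝ) by positivity]
    have hb' : (0:ℝ) < b := by exact_mod_cast hb
    linarith
  rcases Nat.eq_zero_or_pos n with rfl | hn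
  · -- n = 0 : the subtype is empty
    have : IsEmpty {P : Finset (Finset (Fin 0)) //
        ∃ A B : Finset (Fin 0), P = {A, B} ∧ Disjoint A B ∧
          A.card = a ∧ B.card = b ∧ ∀ x ∈ A, ∀ y ∈ B, G.Adj x y} := by
      refine ⟨fun P => ?_⟩
      obtain ⟨_, A, B, _, _, hA, _, _⟩ := P
      have : A = ∅ := Finset.eq_empty_of_forall_notMem (fun x _ => x.elim0)
      rw [this] at hA
      simp at hA
      omega
    rw [Nat.card_of_isEmpty]
    have : ((0:ℕ) : ℝ) ^ ((a : ℝ) + b - a * b / s) = 0 := by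
      rw [Nat.cast_zero, Real.zero_rpow (ne_of_gt hexp)]
    rw [this]
    simp
  -- main case
  set bsets := Finset.univ.filter (fun B : Finset (Fin n) => B.card = b) with hbsets
  set d : Finset (Fin n) → ℕ := fun B => (commonNbhd G B).card with hd
  set P1 := (Finset.univ ×ˢ Finset.univ).filter
      (fun p : Finset (Fin n) × Finset (Fin n) =>
        p.1.card = a ∧ p.2.card = b ∧ p.1 ⊆ commonNbhd G p.2) with hP1
  -- Step 1: the subtype injects into P1
  have step1 : (Nat.card {P : Finset (Finset (Fin n)) //
      ∃ A B : Finset (Fin n), P = {A, B} ∧ Disjoint A B ∧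
        A.card = a ∧ B.card = b ∧ ∀ x ∈ A, ∀ y ∈ B, G.Adj x y}) ≤ P1.card := by
    have hAB : ∀ P : {P : Finset (Finset (Fin n)) //
        ∃ A B : Finset (Fin n), P = {A, B} ∧ Disjoint A B ∧
          A.card = a ∧ B.card = b ∧ ∀ x ∈ A, ∀ y ∈ B, G.Adj x y},
        ∃ pr : Finset (Fin n) × Finset (Fin n), P.1 = {pr.1, pr.2} ∧ pr ∈ P1 := by
      rintro ⟨P, A, B, rfl, hdisj, hA, hB, hadj⟩
      refine ⟨(A, B), rfl, ?_⟩
      simp only [hP1, mem_filter, mem_product]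
      exact ⟨⟨mem_univ _, mem_univ _⟩, hA, hB,
        fun x hx => (mem_commonNbhd G).2 (fun y hy => hadj x hx y hy)⟩
    choose f hf1 hf2 using hAB
    have := Nat.card_le_card_of_injective
      (fun P => (⟨f P, hf2 P⟩ : {p // p ∈ P1}))
      (by
        intro P Q h
        simp only [Subtype.mk.injEq] at h
        apply Subtype.ext
        rw [hf1 P, hf1 Q, h])
    rwa [Nat.card_eq_finsetCard] at this
  -- Step 2: P1.card = ∑ choose (d B) a
  have step2 : P1.card = ∑ B ∈ bsets, (d B).choose a := card_filter_pairs (commonNbhd G) a b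
  -- Step 3: double counting & K_{s,t}-freeness
  have step3 : ∑ B ∈ bsets, (d B).choose s ≤ n ^ s * t ^ b := by
    rw [hbsets, hd, double_count G b s]
    calc ∑ S ∈ Finset.univ.filter (fun S : Finset (Fin n) => S.card = s),
          ((commonNbhd G S).card.choose b)
        ≤ ∑ S ∈ Finset.univ.filter (fun S : Finset (Fin n) => S.card = s),
          ((t-1).choose b) := by
          refine Finset.sum_le_sum fun S hS => ?_
          simp only [mem_filter] at hS
          exact Nat.choose_le_choose b (cn_card_le ht G hG hS.2)
      _ = (n.choose s) * ((t-1).choose b) := by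
          rw [Finset.sum_const, card_filter_card_eq, smul_eq_mul]
      _ ≤ n ^ s * t ^ b := by
          apply Nat.mul_le_mul (Nat.choose_le_pow _ _)
          exact le_trans (Nat.choose_le_pow _ _) (Nat.pow_le_pow_left (by omega) b)
  -- Step 4: ∑ (d B)^s ≤ D * n^s  (over ℝ)
  have hbcard : bsets.card = n.choose b := card_filter_card_eq
  have step4 : ∑ B ∈ bsets, ((d B : ℝ)) ^ (s : ℕ) ≤ D * (n:ℝ) ^ (s : ℕ) := by
    calc ∑ B ∈ bsets, ((d B : ℝ)) ^ (s : ℕ)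
        ≤ ∑ B ∈ bsets, (2 * s : ℝ) ^ s * (Nat.factorial s : ℝ) * (((d B).choose s : ℝ) + 1) :=
          Finset.sum_le_sum fun B _ => pow_le_const_mul_choose s hs (d B)
      _ = (2 * s : ℝ) ^ s * (Nat.factorial s : ℝ) *
            ((∑ B ∈ bsets, ((d B).choose s : ℝ)) + bsets.card) := by
          simp only [mul_add, mul_one]
          rw [Finset.sum_add_distrib, Finset.sum_const, ← Finset.mul_sum, nsmul_eq_mul]
          ring
      _ ≤ (2 * s : ℝ) ^ s * (Nat.factorial s : ℝ) * (((n:ℝ) ^ s * (t:ℝ) ^ b) + (n:ℝ) ^ b) := by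
          apply mul_le_mul_of_nonneg_left _ (by positivity)
          apply add_le_add
          · have : ((∑ B ∈ bsets, (d B).choose s : ℕ) : ℝ) ≤ ((n ^ s * t ^ b : ℕ) : ℝ) := by
              exact_mod_cast step3
            push_cast at this
            exact this
          · rw [hbcard]
            exact_mod_cast Nat.choose_le_pow n b
      _ ≤ D * (n:ℝ) ^ (s : ℕ) := by
          rw [hD]
          have hnb : (n:ℝ) ^ b ≤ (n:ℝ) ^ s :=
            pow_le_pow_right₀ (by exact_mod_cast hn) hbs
          have h0 : (0:ℝ) ≤ (2 * s : ℝ) ^ s * (Nat.factorial s : ℝ) := by positivity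
          have hexp2 : (n:ℝ) ^ s * (t:ℝ) ^ b + (n:ℝ) ^ b ≤ ((t:ℝ) ^ b + 1) * (n:ℝ) ^ s := by
            nlinarith [pow_nonneg (show (0:ℝ) ≤ (n:ℝ) by positivity) s]
          calc (2 * s : ℝ) ^ s * (Nat.factorial s : ℝ) * (((n:ℝ) ^ s * (t:ℝ) ^ b) + (n:ℝ) ^ b)
              ≤ (2 * s : ℝ) ^ s * (Nat.factorial s : ℝ) * (((t:ℝ) ^ b + 1) * (n:ℝ) ^ s) :=
                mul_le_mul_of_nonneg_left hexp2 h0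
            _ = (2 * s : ℝ) ^ s * (Nat.factorial s : ℝ) * ((t:ℝ) ^ b + 1) * (n:ℝ) ^ s := by ring
  -- Step 5: Hölder
  have hpq : Real.HolderConjugate ((s:ℝ)/a) ((s:ℝ)/((s:ℝ)-(a:ℝ))) := by
    rw [Real.holderConjugate_iff]
    constructor
    · rw [lt_div_iff₀ (by positivity), one_mul]
      exact_mod_cast has
    · have hsa : ((s:ℝ) - a) ≠ 0 := by
        have : (a:ℝ) < s := by exact_mod_cast has
        linarith [this]
      field_simp
      ring
  have step5 : ∑ B ∈ bsets, ((d B : ℝ)) ^ (a : ℝ)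
      ≤ (∑ B ∈ bsets, ((d B : ℝ)) ^ (s : ℝ)) ^ ((a:ℝ)/s) * ((bsets.card : ℝ)) ^ (1 - (a:ℝ)/s) := by
    have := Real.inner_le_Lp_mul_Lq_of_nonneg (s := bsets)
      (f := fun B => ((d B : ℝ)) ^ (a : ℝ)) (g := fun _ => (1:ℝ)) hpq
      (fun B _ => by positivity) (fun B _ => by norm_num)
    simp only [mul_one, Real.one_rpow] at this
    calc ∑ B ∈ bsets, ((d B : ℝ)) ^ (a : ℝ)
        ≤ (∑ B ∈ bsets, (((d B : ℝ)) ^ (a : ℝ)) ^ ((s:ℝ)/a)) ^ (1/((s:ℝ)/a)) *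
          (∑ _B ∈ bsets, (1:ℝ)) ^ (1/((s:ℝ)/((s:ℝ)-(a:ℝ)))) := this
      _ = (∑ B ∈ bsets, ((d B : ℝ)) ^ (s : ℝ)) ^ ((a:ℝ)/s) * ((bsets.card : ℝ)) ^ (1 - (a:ℝ)/s) := by
          have e1 : ∀ B ∈ bsets, (((d B : ℝ)) ^ (a:ℝ)) ^ ((s:ℝ)/a) = ((d B : ℝ)) ^ (s:ℝ) := by
            intro B _
            rw [← Real.rpow_mul (by positivity)]
            congr 1
            field_simp
          have e2 : 1/((s:ℝ)/a) = (a:ℝ)/s := one_div_div _ _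
          have e3 : (1:ℝ)/((s:ℝ)/((s:ℝ)-(a:ℝ))) = 1 - (a:ℝ)/s := by
            rw [one_div_div, sub_div, div_self hs0]
          rw [Finset.sum_congr rfl e1, e2, e3, Finset.sum_const, nsmul_eq_mul, mul_one]
  -- assemble
  have hn' : (0:ℝ) < (n:ℝ) := by exact_mod_cast hn
  have hD0 : (0:ℝ) ≤ D := by linarith
  have hcast : ((P1.card : ℕ) : ℝ) ≤ ∑ B ∈ bsets, ((d B : ℝ)) ^ (a : ℝ) := by
    calc ((P1.card : ℕ) : ℝ) = ((∑ B ∈ bsets, (d B).choose a : ℕ) : ℝ) := by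
          exact_mod_cast step2
      _ = ∑ B ∈ bsets, (((d B).choose a : ℕ) : ℝ) := by push_cast; rfl
      _ ≤ ∑ B ∈ bsets, ((d B : ℝ)) ^ (a : ℝ) := by
          refine Finset.sum_le_sum fun B _ => ?_
          rw [Real.rpow_natCast]
          exact_mod_cast Nat.choose_le_pow (d B) a
  have step4' : ∑ B ∈ bsets, ((d B : ℝ)) ^ (s : ℝ) ≤ D * (n:ℝ) ^ (s : ℝ) := by
    have e : ∀ B ∈ bsets, ((d B : ℝ)) ^ (s : ℝ) = ((d B : ℝ)) ^ (s : ℕ) :=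
      fun B _ => Real.rpow_natCast _ s
    rw [Finset.sum_congr rfl e, Real.rpow_natCast]
    exact step4
  have m1 : (∑ B ∈ bsets, ((d B : ℝ)) ^ (s : ℝ)) ^ ((a:ℝ)/s)
      ≤ (D * (n:ℝ) ^ (s : ℝ)) ^ ((a:ℝ)/s) := by
    apply Real.rpow_le_rpow _ step4' (by positivity)
    exact Finset.sum_nonneg fun B _ => Real.rpow_nonneg (by positivity) _
  have has1 : (a:ℝ)/s ≤ 1 := by
    rw [div_le_one (by positivity)]
    exact_mod_cast has.le
  have m2 : ((bsets.card : ℕ) : ℝ) ^ (1 - (a:ℝ)/s) ≤ ((n:ℝ) ^ (b : ℝ)) ^ (1 - (a:ℝ)/s) := by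
    apply Real.rpow_le_rpow (by positivity) _ (by linarith)
    rw [hbcard, Real.rpow_natCast]
    exact_mod_cast Nat.choose_le_pow n b
  have final : (D * (n:ℝ) ^ (s : ℝ)) ^ ((a:ℝ)/s) * ((n:ℝ) ^ (b : ℝ)) ^ (1 - (a:ℝ)/s)
      = D ^ ((a:ℝ)/s) * (n:ℝ) ^ ((a : ℝ) + b - a * b / s) := by
    rw [Real.mul_rpow hD0 (by positivity),
        ← Real.rpow_mul (le_of_lt hn'), ← Real.rpow_mul (le_of_lt hn'),
        mul_assoc, ← Real.rpow_add hn']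
    congr 1
    field_simp
    ring
  have hstep : ((P1.card : ℕ) : ℝ) ≤ D ^ ((a:ℝ)/s) * (n:ℝ) ^ ((a : ℝ) + b - a * b / s) := by
    calc ((P1.card : ℕ) : ℝ) ≤ ∑ B ∈ bsets, ((d B : ℝ)) ^ (a : ℝ) := hcast
      _ ≤ (∑ B ∈ bsets, ((d B : ℝ)) ^ (s : ℝ)) ^ ((a:ℝ)/s) *
            ((bsets.card : ℕ) : ℝ) ^ (1 - (a:ℝ)/s) := step5
      _ ≤ (D * (n:ℝ) ^ (s : ℝ)) ^ ((a:ℝ)/s) * ((n:ℝ) ^ (b : ℝ)) ^ (1 - (a:ℝ)/s) := by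
          exact mul_le_mul m1 m2 (Real.rpow_nonneg (Nat.cast_nonneg _) _)
            (Real.rpow_nonneg (mul_nonneg hD0 (Real.rpow_nonneg hn'.le _)) _)
      _ = D ^ ((a:ℝ)/s) * (n:ℝ) ^ ((a : ℝ) + b - a * b / s) := final
  exact le_trans (Nat.cast_le.mpr step1) hstep
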